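/- Let G be a finite type and δ : G → G → ℝ be symmetric. For all finite subsets A ⊆ B of G and every x ∈ G with x ∉ B, the difference of marginal gains satisfies the identity (f(A ∪ {x}) − f(A)) − (f(B ∪ {x}) − f(B)) = 2 · Σ_{i ∈ B \ A} (−δ(i, x)). -/
import Mathlib


open Finset

/-- The removal-set objective:
`f E = ∑_{i ∈ G \ E} ∑_{j ∈ G \ E} δ i j − ∑_{i ∈ G} ∑_{j ∈ G} δ i j`. -/
def removalObj {G : Type*} [Fintype G] [DecidableEq G] (δ : G → G → ℝ) (E : Finset G) : ℝ :=
  (∑ i ∈ Eᶜ, ∑ j ∈ Eᶜ, δ i j) - ∑ i : G, ∑ j : G, δ i j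

lemma removalObj_gain {G : Type*} [Fintype G] [DecidableEq G] (δ : G → G → ℝ)
    (hsymm : ∀ i j, δ i j = δ j i) (E : Finset G) (x : G) (hx : x ∉ E) :
    removalObj δ (insert x E) - removalObj δ E
      = -(δ x x) - 2 * ∑ i ∈ (insert x E)ᶜ, δ i x := by
  have hxc : x ∈ Eᶜ := Finset.mem_compl.2 hx
  have hxS : x ∉ (insert x E)ᶜ := by simp
  have h2 : Eᶜ = insert x ((insert x E)ᶜ) := by
    rw [Finset.compl_insert, Finset.insert_erase hxc]
  unfold removalObj
  rw [h2, Finset.sum_insert hxS, Finset.sum_insert hxS]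
  have hsum : ∀ i ∈ (insert x E)ᶜ,
      (∑ j ∈ insert x ((insert x E)ᶜ), δ i j)
        = δ i x + ∑ j ∈ (insert x E)ᶜ, δ i j := fun i _ =>
    Finset.sum_insert hxS
  rw [Finset.sum_congr rfl hsum, Finset.sum_add_distrib]
  have : (∑ j ∈ (insert x E)ᶜ, δ x j) = ∑ j ∈ (insert x E)ᶜ, δ j x :=
    Finset.sum_congr rfl fun j _ => hsymm x j
  rw [this]
  ring

theorem removalObj_marginal_gain_difference
    {G : Type*} [Fintype G] [DecidableEq G] (δ : G → G → ℝ)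
    (hsymm : ∀ i j, δ i j = δ j i)
    (A B : Finset G) (hAB : A ⊆ B) (x : G) (hx : x ∉ B) :
    (removalObj δ (insert x A) - removalObj δ A)
        - (removalObj δ (insert x B) - removalObj δ B)
      = 2 * ∑ i ∈ B \ A, (-(δ i x)) := by
  have hxA : x ∉ A := fun h => hx (hAB h)
  rw [removalObj_gain δ hsymm A x hxA, removalObj_gain δ hsymm B x hx]
  have hsub : (insert x B)ᶜ ⊆ (insert x A)ᶜ :=
    Finset.compl_subset_compl.2 (Finset.insert_subset_insert x hAB)
  have hdiff : (insert x A)ᶜ \ (insert x B)ᶜ = B \ A := by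
    ext i
    simp only [Finset.mem_sdiff, Finset.mem_compl, Finset.mem_insert, not_or]
    constructor
    · rintro ⟨⟨hix, hiA⟩, h⟩
      push_neg at h
      rcases h (fun h' => (hix h').elim) with hiB
      exact ⟨hiB, hiA⟩
    · rintro ⟨hiB, hiA⟩
      refine ⟨⟨fun h' => hx (h' ▸ hiB), hiA⟩, ?_⟩
      push_neg
      intro h'
      exact hiB
  have hsplit := Finset.sum_sdiff (f := fun i => δ i x) hsub
  rw [hdiff] at hsplit
  rw [Finset.sum_neg_distrib]
  linarith
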